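/- Let q be an odd prime power and m a positive integer with gcd(m, q−1) = 1. Let χ be the nontrivial quadratic character on F_q and a ∈ F_q*. Define P_m(x,a) = Σ_{k=0}^{m−1} C(2m, 2k+1) a^k x^{m−1−k}. Then for every g ∈ F_q*, Σ_{x∈F_q} χ(x·P_m(gx², a)) = 0. -/

import Mathlib

open Finset

section Aux

variable {F : Type*} [Field F] [Fintype F] [DecidableEq F]

private lemma sum_range_even_odd {M : Type*} [AddCommMonoid M] (f : ℕ → M) (n : ℕ) :
    ∑ i ∈ range (2 * n), f i =
      (∑ k ∈ range n, f (2 * k)) + ∑ k ∈ range n, f (2 * k + 1) := by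
  induction n with
  | zero => simp
  | succ n ih =>
    have h2 : 2 * (n + 1) = (2 * n + 1) + 1 := by ring
    rw [h2, sum_range_succ, sum_range_succ, sum_range_succ, sum_range_succ, ih]
    have h3 : 2 * n + 1 = 2 * n + 1 := rfl
    abel

/-- The auxiliary odd polynomial function. -/
private def hfun (m : ℕ) (d z : F) : F :=
  z * ∑ k ∈ range m, ((2 * m).choose (2 * k + 1) : F) * d ^ k * (z ^ 2) ^ (m - 1 - k)

private lemma hfun_eq1 (m : ℕ) (d z : F) :
    hfun m d z =
      ∑ k ∈ range m, ((2 * m).choose (2 * k + 1) : F) * d ^ k * z ^ (2 * (m - 1 - k) + 1) := by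
  rw [hfun, mul_sum]
  refine sum_congr rfl fun k _ => ?_
  rw [← pow_mul]
  ring

private lemma hfun_eq2 (m : ℕ) (d z : F) :
    hfun m d z =
      ∑ k ∈ range m, ((2 * m).choose (2 * k + 1) : F) * d ^ (m - 1 - k) * z ^ (2 * k + 1) := by
  rw [hfun_eq1, ← sum_range_reflect]
  refine sum_congr rfl fun k hk => ?_
  rw [mem_range] at hk
  have h1 : m - 1 - (m - 1 - k) = k := by omega
  have h2 : 2 * (m - 1 - k) + 1 = 2 * m - (2 * k + 1) := by omega
  have h3 : (2 * m).choose (2 * (m - 1 - k) + 1) = (2 * m).choose (2 * k + 1) := by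
    rw [h2, Nat.choose_symm (by omega)]
  rw [h1, h3]

private lemma hfun_zero (m : ℕ) (d : F) : hfun m d 0 = 0 := by
  rw [hfun, zero_mul]

/-- Identity A : `z^(2m) * h(d/z) = d^m * h(z)`. -/
private lemma idA (m : ℕ) (d z : F) (hz : z ≠ 0) :
    z ^ (2 * m) * hfun m d (d * z⁻¹) = d ^ m * hfun m d z := by
  rw [hfun_eq1, hfun_eq2, mul_sum, mul_sum]
  refine sum_congr rfl fun k hk => ?_
  rw [mem_range] at hk
  set j := m - 1 - k with hj
  have hmj : m = k + j + 1 := by omega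
  rw [hmj]
  have hzp : z ^ (2 * j + 1) * (z ^ (2 * j + 1))⁻¹ = 1 := mul_inv_cancel₀ (pow_ne_zero _ hz)
  rw [mul_pow, inv_pow]
  linear_combination (((2 * (k + j + 1)).choose (2 * k + 1) : F) * d ^ k * d ^ (2 * j + 1) * z ^ (2 * k + 1)) * hzp

/-- Identity B : `2e·h(z) = (z+e)^(2m) − (z−e)^(2m)` where `d = e²`. -/
private lemma idB (m : ℕ) (hm : 0 < m) (e z : F) :
    2 * e * hfun m (e ^ 2) z = (z + e) ^ (2 * m) - (z - e) ^ (2 * m) := by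
  have hA : (z + e) ^ (2 * m) =
      ∑ i ∈ range (2 * m + 1), z ^ i * e ^ (2 * m - i) * ((2 * m).choose i : F) :=
    add_pow z e (2 * m)
  have hB : (z - e) ^ (2 * m) =
      ∑ i ∈ range (2 * m + 1), z ^ i * (-e) ^ (2 * m - i) * ((2 * m).choose i : F) := by
    rw [sub_eq_add_neg]; exact add_pow z (-e) (2 * m)
  have hext : ∑ i ∈ range (2 * (m + 1)),
        z ^ i * (e ^ (2 * m - i) - (-e) ^ (2 * m - i)) * ((2 * m).choose i : F)
      = (z + e) ^ (2 * m) - (z - e) ^ (2 * m) := by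
    have h2 : 2 * (m + 1) = (2 * m + 1) + 1 := by ring
    have hlast : z ^ (2 * m + 1) * (e ^ (2 * m - (2 * m + 1)) - (-e) ^ (2 * m - (2 * m + 1)))
        * ((2 * m).choose (2 * m + 1) : F) = 0 := by
      have : (2 * m).choose (2 * m + 1) = 0 := Nat.choose_eq_zero_of_lt (by omega)
      rw [this]; simp
    rw [h2, sum_range_succ, hlast, add_zero, hA, hB, ← sum_sub_distrib]
    refine sum_congr rfl fun i _ => ?_
    ring
  rw [← hext, sum_range_even_odd]
  have heven : ∑ k ∈ range (m + 1),
      z ^ (2 * k) * (e ^ (2 * m - 2 * k) - (-e) ^ (2 * m - 2 * k)) * ((2 * m).choose (2 * k) : F)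
      = 0 := by
    refine sum_eq_zero fun k _ => ?_
    have hev : Even (2 * m - 2 * k) := ⟨m - k, by omega⟩
    rw [hev.neg_pow, sub_self, mul_zero, zero_mul]
  rw [heven, zero_add, sum_range_succ]
  have hlast2 : z ^ (2 * m + 1) * (e ^ (2 * m - (2 * m + 1)) - (-e) ^ (2 * m - (2 * m + 1)))
      * ((2 * m).choose (2 * m + 1) : F) = 0 := by
    have : (2 * m).choose (2 * m + 1) = 0 := Nat.choose_eq_zero_of_lt (by omega)
    rw [this]; simp
  rw [hlast2, add_zero, hfun_eq2, mul_sum]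
  refine sum_congr rfl fun k hk => ?_
  rw [mem_range] at hk
  have hodd : Odd (2 * m - (2 * k + 1)) := ⟨m - 1 - k, by omega⟩
  rw [hodd.neg_pow]
  have hexp : 2 * m - (2 * k + 1) = 2 * (m - 1 - k) + 1 := by omega
  rw [hexp, ← pow_mul]
  ring

end Aux

section Char

variable {F : Type*} [Field F] [Fintype F] [DecidableEq F]

private lemma pow_m_bijective (m : ℕ) (hm : 0 < m)
    (hgcd : Nat.gcd m (Fintype.card F - 1) = 1) :
    Function.Bijective (fun x : F => x ^ m) := by
  rw [Fintype.bijective_iff_injective_and_card]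
  refine ⟨fun x y hxy => ?_, rfl⟩
  simp only at hxy
  rcases eq_or_ne x 0 with hx | hx
  · subst hx
    rw [zero_pow hm.ne', eq_comm, pow_eq_zero_iff hm.ne'] at hxy
    exact hxy.symm
  rcases eq_or_ne y 0 with hy | hy
  · subst hy
    rw [zero_pow hm.ne', pow_eq_zero_iff hm.ne'] at hxy
    exact hxy
  have hco : (Nat.card Fˣ).Coprime m := by
    rw [Nat.card_eq_fintype_card, Fintype.card_units, Nat.coprime_comm]
    exact hgcd
  have := (powCoprime hco).injective (a₁ := Units.mk0 x hx) (a₂ := Units.mk0 y hy)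
  have hu : (Units.mk0 x hx) ^ m = (Units.mk0 y hy) ^ m := by
    ext
    push_cast
    exact hxy
  have := this hu
  simpa using congrArg Units.val this

private lemma sum_sq_sub_one (hF2 : ringChar F ≠ 2) :
    ∑ v : F, quadraticChar F (v ^ 2 - 1) = -1 := by
  classical
  have h1 : ∑ v ∈ (univ : Finset F).erase 1, quadraticChar F (v ^ 2 - 1)
      = ∑ v : F, quadraticChar F (v ^ 2 - 1) := by
    rw [← Finset.sum_erase_add _ _ (mem_univ (1 : F))]
    simp
  rw [← h1]
  have h2 : ∀ v ∈ (univ : Finset F).erase 1,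
      quadraticChar F (v ^ 2 - 1) = quadraticChar F ((v + 1) * (v - 1)⁻¹) := by
    intro v hv
    have hv1 : v - 1 ≠ 0 := sub_ne_zero.mpr (Finset.ne_of_mem_erase hv)
    have : v ^ 2 - 1 = ((v + 1) * (v - 1)⁻¹) * (v - 1) ^ 2 := by
      field_simp
      ring
    rw [this, map_mul, quadraticChar_sq_one' hv1, mul_one]
  rw [Finset.sum_congr rfl h2]
  have h2ne : (2 : F) ≠ 0 := Ring.two_ne_zero hF2
  have h3 : ∑ v ∈ (univ : Finset F).erase 1, quadraticChar F ((v + 1) * (v - 1)⁻¹)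
      = ∑ t ∈ (univ : Finset F).erase 1, quadraticChar F t := by
    refine Finset.sum_nbij' (fun v => (v + 1) * (v - 1)⁻¹) (fun t => (t + 1) * (t - 1)⁻¹)
      ?_ ?_ ?_ ?_ ?_
    · intro v hv
      have hv1 : v - 1 ≠ 0 := sub_ne_zero.mpr (Finset.ne_of_mem_erase hv)
      refine Finset.mem_erase.mpr ⟨?_, mem_univ _⟩
      intro hcon
      rw [mul_inv_eq_iff_eq_mul₀ hv1, one_mul] at hcon
      have : (2 : F) = 0 := by linear_combination hcon
      exact h2ne this
    · intro t ht
      have ht1 : t - 1 ≠ 0 := sub_ne_zero.mpr (Finset.ne_of_mem_erase ht)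
      refine Finset.mem_erase.mpr ⟨?_, mem_univ _⟩
      intro hcon
      rw [mul_inv_eq_iff_eq_mul₀ ht1, one_mul] at hcon
      have : (2 : F) = 0 := by linear_combination hcon
      exact h2ne this
    · intro v hv
      have hv1 : v - 1 ≠ 0 := sub_ne_zero.mpr (Finset.ne_of_mem_erase hv)
      have h11 : (1:F) + 1 ≠ 0 := by rwa [one_add_one_eq_two]
      field_simp [h2ne]
      rw [show v + 1 - (v - 1) = 2 by ring, div_eq_iff h2ne]
      ring
    · intro t ht
      have ht1 : t - 1 ≠ 0 := sub_ne_zero.mpr (Finset.ne_of_mem_erase ht)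
      have h11 : (1:F) + 1 ≠ 0 := by rwa [one_add_one_eq_two]
      field_simp [h2ne]
      rw [show t + 1 - (t - 1) = 2 by ring, div_eq_iff h2ne]
      ring
    · intro v hv; rfl
  rw [h3]
  have h4 : ∑ t ∈ (univ : Finset F).erase 1, quadraticChar F t
      = (∑ t : F, quadraticChar F t) - quadraticChar F 1 := by
    rw [← Finset.sum_erase_add _ _ (mem_univ (1 : F))]
    ring
  rw [h4, quadraticChar_sum_zero hF2, map_one]
  ring

end Char

section Key

variable {F : Type*} [Field F] [Fintype F] [DecidableEq F]

private lemma key_nonsquare (m : ℕ) (hmodd : Odd m) (d : F) (hns : ¬ IsSquare d) :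
    ∑ z : F, quadraticChar F (hfun m d z) = 0 := by
  have hd : d ≠ 0 := fun h => hns (h ▸ ⟨0, by simp⟩)
  have hinv : Function.Involutive (fun z : F => d * z⁻¹) := by
    intro z
    rcases eq_or_ne z 0 with rfl | hz
    · simp
    · field_simp
  have hre : ∑ z : F, quadraticChar F (hfun m d (d * z⁻¹))
      = ∑ z : F, quadraticChar F (hfun m d z) :=
    Fintype.sum_bijective _ hinv.bijective _ _ (fun z => rfl)
  have key : ∀ z : F, quadraticChar F (hfun m d (d * z⁻¹))
      = - quadraticChar F (hfun m d z) := by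
    intro z
    rcases eq_or_ne z 0 with rfl | hz
    · simp [hfun_zero]
    · have hA := idA m d z hz
      have h1 : quadraticChar F (z ^ (2 * m)) = 1 := by
        rw [pow_mul, map_pow, quadraticChar_sq_one' hz, one_pow]
      have h2 : quadraticChar F (d ^ m) = -1 := by
        rw [map_pow, quadraticChar_neg_one_iff_not_isSquare.mpr hns, hmodd.neg_one_pow]
      have := congrArg (quadraticChar F) hA
      rw [map_mul, map_mul, h1, h2, one_mul] at this
      rw [this]
      ring
  have hS : ∑ z : F, quadraticChar F (hfun m d z)
      = - ∑ z : F, quadraticChar F (hfun m d z) := by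
    conv_lhs => rw [← hre]
    rw [Finset.sum_congr rfl (fun z _ => key z)]
    exact Finset.sum_neg_distrib _
  linarith

private lemma key_square (m : ℕ) (hm : 0 < m)
    (hgcd : Nat.gcd m (Fintype.card F - 1) = 1)
    (hF2 : ringChar F ≠ 2) (e : F) (he : e ≠ 0) :
    ∑ z : F, quadraticChar F (hfun m (e ^ 2) z) = 0 := by
  have h2ne : (2 : F) ≠ 0 := Ring.two_ne_zero hF2
  have h2e : 2 * e ≠ 0 := mul_ne_zero h2ne he
  -- value at z = e
  have hhe : quadraticChar F (hfun m (e ^ 2) e) = quadraticChar F (2 * e) := by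
    have hBe := idB m hm e e
    have hz0 : (e - e) ^ (2 * m) = 0 := by
      rw [sub_self, zero_pow (by omega : 2 * m ≠ 0)]
    rw [hz0, sub_zero, show e + e = 2 * e by ring] at hBe
    have h2m : (2 * e) ^ (2 * m) = (2 * e) * (2 * e) ^ (2 * m - 1) := by
      rw [← pow_succ']
      congr 1
      omega
    have hval : hfun m (e ^ 2) e = (2 * e) ^ (2 * m - 1) := by
      apply mul_left_cancel₀ h2e
      rw [hBe, h2m]
    have hexp : 2 * m - 1 = 2 * (m - 1) + 1 := by omega
    rw [hval, map_pow, hexp, pow_succ, pow_mul, quadraticChar_sq_one h2e, one_pow, one_mul]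
  -- sum over z ≠ e via Möbius substitution
  have hsum1 : ∑ z ∈ (univ : Finset F).erase e, quadraticChar F (hfun m (e ^ 2) z)
      = ∑ u ∈ (univ : Finset F).erase 1,
          quadraticChar F (2 * e) * quadraticChar F (u ^ (2 * m) - 1) := by
    refine Finset.sum_nbij' (i := fun z => (z + e) * (z - e)⁻¹)
      (j := fun u => e * (u + 1) * (u - 1)⁻¹) ?_ ?_ ?_ ?_ ?_
    · intro z hz
      have hze : z - e ≠ 0 := sub_ne_zero.mpr (Finset.ne_of_mem_erase hz)
      refine Finset.mem_erase.mpr ⟨?_, mem_univ _⟩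
      intro hcon
      rw [mul_inv_eq_iff_eq_mul₀ hze, one_mul] at hcon
      exact h2e (by linear_combination hcon)
    · intro u hu
      have hu1 : u - 1 ≠ 0 := sub_ne_zero.mpr (Finset.ne_of_mem_erase hu)
      refine Finset.mem_erase.mpr ⟨?_, mem_univ _⟩
      intro hcon
      rw [mul_inv_eq_iff_eq_mul₀ hu1] at hcon
      exact h2e (by linear_combination hcon)
    · intro z hz
      have hze : z - e ≠ 0 := sub_ne_zero.mpr (Finset.ne_of_mem_erase hz)
      have hee : e + e ≠ 0 := by
        rw [show e + e = 2 * e by ring]; exact h2e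
      field_simp
      rw [show z + e - (z - e) = 2 * e by ring, div_eq_iff h2e]
      ring
    · intro u hu
      have hu1 : u - 1 ≠ 0 := sub_ne_zero.mpr (Finset.ne_of_mem_erase hu)
      field_simp
      rw [show u + 1 - (u - 1) = 2 by ring, div_eq_iff h2ne]
      ring
    · intro z hz
      have hze : z - e ≠ 0 := sub_ne_zero.mpr (Finset.ne_of_mem_erase hz)
      show quadraticChar F (hfun m (e ^ 2) z)
          = quadraticChar F (2 * e) * quadraticChar F (((z + e) * (z - e)⁻¹) ^ (2 * m) - 1)
      have hkey : (((z + e) * (z - e)⁻¹) ^ (2 * m) - 1) * (z - e) ^ (2 * m)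
          = 2 * e * hfun m (e ^ 2) z := by
        rw [idB m hm]
        field_simp
        rw [div_pow, sub_mul, div_mul_cancel₀ _ (pow_ne_zero _ hze), one_mul]
      have hχ := congrArg (quadraticChar F) hkey
      rw [map_mul, map_mul] at hχ
      have hsq : quadraticChar F ((z - e) ^ (2 * m)) = 1 := by
        rw [pow_mul, map_pow, quadraticChar_sq_one' hze, one_pow]
      rw [hsq, mul_one] at hχ
      rw [hχ, ← mul_assoc, ← map_mul]
      have h1 : quadraticChar F (2 * e * (2 * e)) = 1 := by
        rw [← pow_two]
        exact quadraticChar_sq_one' h2e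
      rw [h1, one_mul]
  have hsum2 : ∑ u ∈ (univ : Finset F).erase 1, quadraticChar F (u ^ (2 * m) - 1)
      = ∑ u : F, quadraticChar F (u ^ (2 * m) - 1) := by
    rw [← Finset.sum_erase_add _ _ (mem_univ (1 : F))]
    simp
  have hsum3 : ∑ u : F, quadraticChar F (u ^ (2 * m) - 1)
      = ∑ v : F, quadraticChar F (v ^ 2 - 1) := by
    refine Fintype.sum_bijective _ (pow_m_bijective m hm hgcd) _ _ (fun u => ?_)
    rw [mul_comm 2 m, pow_mul]
  rw [← Finset.sum_erase_add _ _ (mem_univ e), hsum1, hhe, ← Finset.mul_sum,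
    hsum2, hsum3, sum_sq_sub_one hF2]
  ring

end Key

theorem stmt_13 (F : Type*) [Field F] [Fintype F] [DecidableEq F]
    (hodd : Odd (Fintype.card F)) (m : ℕ) (hm : 0 < m)
    (hgcd : Nat.gcd m (Fintype.card F - 1) = 1) (a : F) (ha : a ≠ 0)
    (g : F) (hg : g ≠ 0) :
    ∑ x : F, quadraticChar F (x *
        ∑ k ∈ Finset.range m,
          (Nat.choose (2 * m) (2 * k + 1) : F) * a ^ k * (g * x ^ 2) ^ (m - 1 - k)) = 0 := by
  classical
  have hF2 : ringChar F ≠ 2 := by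
    intro h
    obtain ⟨r, hr⟩ := hodd
    have h0 := FiniteField.even_card_iff_char_two.mp h
    omega
  have hmodd : Odd m := by
    rcases Nat.even_or_odd m with he | ho
    · exfalso
      obtain ⟨s, hs⟩ := he
      have hc2 : 1 < Fintype.card F := Fintype.one_lt_card
      obtain ⟨r, hr⟩ := hodd
      have h2 : (2 : ℕ) ∣ Nat.gcd m (Fintype.card F - 1) :=
        Nat.dvd_gcd ⟨s, by omega⟩ ⟨r, by omega⟩
      rw [hgcd] at h2
      omega
    · exact ho
  have hrel : ∀ x : F, hfun m (a * g) (g * x)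
      = g ^ m * (x * ∑ k ∈ Finset.range m,
          (Nat.choose (2 * m) (2 * k + 1) : F) * a ^ k * (g * x ^ 2) ^ (m - 1 - k)) := by
    intro x
    rw [hfun, Finset.mul_sum, Finset.mul_sum, Finset.mul_sum]
    refine Finset.sum_congr rfl fun k hk => ?_
    rw [Finset.mem_range] at hk
    set j := m - 1 - k with hj
    have hmj : m = k + j + 1 := by omega
    rw [hmj]
    ring
  have hgg : quadraticChar F g * quadraticChar F g = 1 := by
    rw [← map_mul, ← pow_two]
    exact quadraticChar_sq_one' hg
  have hpt : ∀ x : F, quadraticChar F (x *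
        ∑ k ∈ Finset.range m,
          (Nat.choose (2 * m) (2 * k + 1) : F) * a ^ k * (g * x ^ 2) ^ (m - 1 - k))
      = quadraticChar F g * quadraticChar F (hfun m (a * g) (g * x)) := by
    intro x
    have hodd' : quadraticChar F g ^ m = quadraticChar F g := by
      obtain ⟨r, hr⟩ := hmodd
      rw [hr, pow_succ, pow_mul, quadraticChar_sq_one hg, one_pow, one_mul]
    rw [hrel x]
    conv_rhs => rw [map_mul, map_pow]
    rw [hodd', ← mul_assoc, hgg, one_mul]
  rw [Finset.sum_congr rfl (fun x _ => hpt x), ← Finset.mul_sum]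
  have hb : Function.Bijective (fun x : F => g * x) := mulLeft_bijective₀ g hg
  have hs : ∑ x : F, quadraticChar F (hfun m (a * g) (g * x))
      = ∑ z : F, quadraticChar F (hfun m (a * g) z) :=
    Fintype.sum_bijective _ hb _ _ (fun x => rfl)
  rw [hs]
  rcases em (IsSquare (a * g)) with hsq | hns
  · obtain ⟨e, he⟩ := hsq
    have hag : a * g ≠ 0 := mul_ne_zero ha hg
    have he2 : a * g = e ^ 2 := by rw [he, pow_two]
    have hene : e ≠ 0 := by
      rintro rfl
      apply hag
      rw [he2]
      ring
    rw [he2, key_square m hm hgcd hF2 e hene, mul_zero]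
  · rw [key_nonsquare m hmodd (a * g) hns, mul_zero]
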